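/- For every γ ∈ (0,1) and every step size s > 0, there exists t₀ > 3γ√s (depending only on γ and s) such that along any solution X of the high-resolution differential equation, for all t ≥ t₀, (√s/2) ∫_{t₀}^{t} u^{2γ} ‖∇f(X(u) + √s Ẋ(u))‖² du ≤ E(t₀), where E is the continuous Lyapunov function. -/

import Mathlib

open Set Filter Topology

local notation "⟪" x ", " y "⟫" => @inner ℝ _ _ x y

lemma grad_convex_ineq {d : ℕ} {f : EuclideanSpace ℝ (Fin d) → ℝ}
    (hconv : ConvexOn ℝ Set.univ f) {a g : EuclideanSpace ℝ (Fin d)}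
    (hg : HasGradientAt f g a) (z : EuclideanSpace ℝ (Fin d)) :
    f a + ⟪g, z - a⟫ ≤ f z := by
  set φ : ℝ → ℝ := fun θ => f (θ • (z - a) + a) with hφdef
  have hφc : ConvexOn ℝ Set.univ φ := by
    have h := hconv.comp_affineMap (AffineMap.lineMap a z)
    have : (f ∘ (AffineMap.lineMap a z)) = φ := by
      funext θ
      simp [φ, AffineMap.lineMap_apply, vsub_eq_sub, vadd_eq_add]
    rw [this] at h
    simpa using h
  have hline : HasDerivAt (fun θ : ℝ => θ • (z - a) + a) (z - a) 0 := by
    simpa using ((hasDerivAt_id (0:ℝ)).smul_const (z - a)).add_const a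
  have hφd : HasDerivAt φ ⟪g, z - a⟫ 0 := by
    have ha : (0:ℝ) • (z - a) + a = a := by simp
    have hg' : HasGradientAt f g ((0:ℝ) • (z - a) + a) := by rwa [ha]
    have := hg'.hasFDerivAt.comp_hasDerivAt 0 hline
    simp at this
    exact this
  have := hφc.le_slope_of_hasDerivAt (Set.mem_univ 0) (Set.mem_univ 1) one_pos hφd
  have hs : slope φ 0 1 = f z - f a := by
    simp [slope_def_field, φ]
  rw [hs] at this
  linarith

/-- The continuous Lyapunov function for the underdamped high-resolution ODE. -/
noncomputable def lyapCont (γ s : ℝ) {d : ℕ} (f : EuclideanSpace ℝ (Fin d) → ℝ)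
    (xstar : EuclideanSpace ℝ (Fin d)) (X V : ℝ → EuclideanSpace ℝ (Fin d)) (t : ℝ) : ℝ :=
  (t ^ γ * (t ^ γ - 2 * γ * Real.sqrt s * t ^ (γ - 1)) / (t - 3 * γ * Real.sqrt s)) *
      (t + 3 * γ * Real.sqrt s / 2) * (f (X t + Real.sqrt s • V t) - f xstar) +
    (1 / 2) * ‖(t ^ γ) • V t + (2 * γ * t ^ (γ - 1)) • (X t - xstar)‖ ^ 2 +
    γ * (1 - γ) * t ^ (2 * (γ - 1)) * ‖X t - xstar‖ ^ 2

set_option maxHeartbeats 4000000 in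
/-- For every γ ∈ (0,1) and every step size s > 0, there exists
t₀ > 3γ√s (depending only on γ and s) such that along any solution X of the
high-resolution differential equation, for all t ≥ t₀,
(√s/2) ∫_{t₀}^{t} u^{2γ} ‖∇f(X(u) + √s Ẋ(u))‖² du ≤ E(t₀). -/
theorem underdamped_continuous_integral_bound
    (γ s : ℝ) (hγ : γ ∈ Set.Ioo (0 : ℝ) 1) (hs : 0 < s) :
    ∃ t₀ : ℝ, 3 * γ * Real.sqrt s < t₀ ∧
      ∀ (d : ℕ) (L : ℝ) (f : EuclideanSpace ℝ (Fin d) → ℝ)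
        (f' : EuclideanSpace ℝ (Fin d) → EuclideanSpace ℝ (Fin d))
        (xstar : EuclideanSpace ℝ (Fin d))
        (X V : ℝ → EuclideanSpace ℝ (Fin d)),
        0 < L →
        ConvexOn ℝ Set.univ f →
        (∀ z, HasGradientAt f (f' z) z) →
        (∀ z w, ‖f' z - f' w‖ ≤ L * ‖z - w‖) →
        (∀ z, f xstar ≤ f z) →
        (∀ t ∈ Set.Ioi (0 : ℝ), HasDerivAt X (V t) t) →
        (∀ t ∈ Set.Ioi (0 : ℝ), HasDerivAt V
          (-((3 * γ / t) • V t +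
              (1 + 3 * γ * Real.sqrt s / (2 * t)) • f' (X t + Real.sqrt s • V t))) t) →
        ∀ t : ℝ, t₀ ≤ t →
          (Real.sqrt s / 2) *
              (∫ u in t₀..t, u ^ (2 * γ) * ‖f' (X u + Real.sqrt s • V u)‖ ^ 2) ≤
            lyapCont γ s f xstar X V t₀ := by
  obtain ⟨hγ0, hγ1⟩ := hγ
  have hsq : 0 < Real.sqrt s := Real.sqrt_pos.2 hs
  have hb : 0 < 3 * γ * Real.sqrt s := by positivity
  refine ⟨3 * γ * Real.sqrt s + 1, by linarith, ?_⟩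
  intro d L f f' xstar X V hL hconv hgrad hlip hmin hX hV t ht
  set t₀ : ℝ := 3 * γ * Real.sqrt s + 1 with ht₀def
  have ht₀pos : 0 < t₀ := by rw [ht₀def]; linarith
  -- continuity facts
  have hXc : ContinuousOn X (Ioi 0) := fun u hu => (hX u hu).continuousAt.continuousWithinAt
  have hVc : ContinuousOn V (Ioi 0) := fun u hu => (hV u hu).continuousAt.continuousWithinAt
  have hf'c : Continuous f' := by
    have : LipschitzWith (Real.toNNReal L) f' :=
      LipschitzWith.of_dist_le_mul fun z w => by
        simpa [dist_eq_norm, Real.coe_toNNReal L hL.le] using hlip z w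
    exact this.continuous
  have hGc : ContinuousOn (fun u : ℝ => u ^ (2*γ) * ‖f' (X u + Real.sqrt s • V u)‖ ^ 2)
      (Ioi 0) := by
    apply ContinuousOn.mul
    · exact fun u hu => (Real.continuousAt_rpow_const u _ (Or.inl (ne_of_gt hu))).continuousWithinAt
    · have h1 : ContinuousOn (fun u => f' (X u + Real.sqrt s • V u)) (Ioi 0) :=
        hf'c.comp_continuousOn (hXc.add (hVc.const_smul (Real.sqrt s)))
      exact (h1.norm.pow 2)
  set Φ : ℝ → ℝ := fun w => lyapCont γ s f xstar X V w +
      (Real.sqrt s / 2) * ∫ u in t₀..w, u ^ (2*γ) * ‖f' (X u + Real.sqrt s • V u)‖ ^ 2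
    with hΦdef
  -- the key derivative bound
  have key : ∀ u ∈ Ici t₀, ∃ D, HasDerivAt Φ D u ∧ D ≤ 0 := by
    intro u hu
    rw [mem_Ici, ht₀def] at hu
    have hu0 : (0:ℝ) < u := by linarith
    have hub : 3 * γ * Real.sqrt s < u := by linarith
    have huM : u ∈ Ioi (0:ℝ) := hu0
    have hXu := hX u huM
    have hVu := hV u huM
    have hyu : HasDerivAt (fun w => X w + Real.sqrt s • V w)
        (V u + Real.sqrt s • (-((3 * γ / u) • V u +
          (1 + 3 * γ * Real.sqrt s / (2 * u)) • f' (X u + Real.sqrt s • V u)))) u :=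
      hXu.add (hVu.const_smul (Real.sqrt s))
    have hfy : HasDerivAt (fun w => f (X w + Real.sqrt s • V w))
        (⟪f' (X u + Real.sqrt s • V u), V u + Real.sqrt s • (-((3 * γ / u) • V u +
          (1 + 3 * γ * Real.sqrt s / (2 * u)) • f' (X u + Real.sqrt s • V u)))⟫) u := by
      have h := (hgrad (X u + Real.sqrt s • V u)).hasFDerivAt.comp_hasDerivAt u hyu
      simp at h ⊢
      exact h
    have hq : HasDerivAt (fun w:ℝ => w ^ γ) (γ * u^(γ-1)) u :=
      Real.hasDerivAt_rpow_const (Or.inl hu0.ne')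
    have hp : HasDerivAt (fun w:ℝ => w ^ (γ-1)) ((γ-1) * u^(γ-1-1)) u :=
      Real.hasDerivAt_rpow_const (Or.inl hu0.ne')
    have hw2 : HasDerivAt (fun w:ℝ => w ^ (2*(γ-1))) ((2*(γ-1)) * u^(2*(γ-1)-1)) u :=
      Real.hasDerivAt_rpow_const (Or.inl hu0.ne')
    have hnum : HasDerivAt (fun w:ℝ => w^γ * (w^γ - 2*γ*Real.sqrt s*w^(γ-1)))
        (γ*u^(γ-1) * (u^γ - 2*γ*Real.sqrt s*u^(γ-1)) +
          u^γ * (γ*u^(γ-1) - 2*γ*Real.sqrt s*((γ-1)*u^(γ-1-1)))) u :=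
      hq.mul (hq.sub (hp.const_mul _))
    have hden : HasDerivAt (fun w:ℝ => w - 3*γ*Real.sqrt s) 1 u :=
      (hasDerivAt_id u).sub_const _
    have hdenne : u - 3*γ*Real.sqrt s ≠ 0 := by linarith
    have hfrac := hnum.div hden hdenne
    have hlin : HasDerivAt (fun w:ℝ => w + 3*γ*Real.sqrt s/2) 1 u :=
      (hasDerivAt_id u).add_const _
    have hA := hfrac.mul hlin
    have hT1 := hA.mul (hfy.sub_const (f xstar))
    have hXm : HasDerivAt (fun w => X w - xstar) (V u) u := hXu.sub_const _
    have hU1 := hq.smul hVu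
    have hU2 := (hp.const_mul (2*γ)).smul hXm
    have hU := hU1.add hU2
    have hIn := (hU.inner ℝ hU)
    have hT2 : HasDerivAt (fun w => (1/2 : ℝ) *
        ‖(w ^ γ) • V w + (2 * γ * w ^ (γ - 1)) • (X w - xstar)‖ ^ 2)
        ((1/2 : ℝ) * (⟪(u ^ γ) • V u + (2 * γ * u ^ (γ - 1)) • (X u - xstar),
            (u ^ γ) • (-((3 * γ / u) • V u +
              (1 + 3 * γ * Real.sqrt s / (2 * u)) • f' (X u + Real.sqrt s • V u))) +
              (γ * u ^ (γ-1)) • V u +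
            ((2 * γ * u ^ (γ - 1)) • V u + (2*γ*((γ-1) * u^(γ-1-1))) • (X u - xstar))⟫ +
          ⟪(u ^ γ) • (-((3 * γ / u) • V u +
              (1 + 3 * γ * Real.sqrt s / (2 * u)) • f' (X u + Real.sqrt s • V u))) +
              (γ * u ^ (γ-1)) • V u +
            ((2 * γ * u ^ (γ - 1)) • V u + (2*γ*((γ-1) * u^(γ-1-1))) • (X u - xstar)),
            (u ^ γ) • V u + (2 * γ * u ^ (γ - 1)) • (X u - xstar)⟫)) u := by
      have heq : (fun w => (1/2 : ℝ) *
          ‖(w ^ γ) • V w + (2 * γ * w ^ (γ - 1)) • (X w - xstar)‖ ^ 2) =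
          fun w => (1/2 : ℝ) * ⟪(w ^ γ) • V w + (2 * γ * w ^ (γ - 1)) • (X w - xstar),
            (w ^ γ) • V w + (2 * γ * w ^ (γ - 1)) • (X w - xstar)⟫ := by
        funext w; rw [real_inner_self_eq_norm_sq]
      rw [heq]
      exact hIn.const_mul _
    have hIn2 := hXm.inner ℝ hXm
    have hT3 : HasDerivAt (fun w => γ * (1 - γ) * w ^ (2 * (γ - 1)) * ‖X w - xstar‖ ^ 2)
        ((γ * (1 - γ) * ((2*(γ-1)) * u^(2*(γ-1)-1))) * ⟪X u - xstar, X u - xstar⟫ +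
          (γ * (1 - γ) * u ^ (2 * (γ - 1))) * (⟪X u - xstar, V u⟫ + ⟪V u, X u - xstar⟫)) u := by
      have heq : (fun w => γ * (1 - γ) * w ^ (2 * (γ - 1)) * ‖X w - xstar‖ ^ 2) =
          fun w => (γ * (1 - γ) * w ^ (2 * (γ - 1))) * ⟪X w - xstar, X w - xstar⟫ := by
        funext w; rw [real_inner_self_eq_norm_sq]
      rw [heq]
      exact ((hw2.const_mul (γ * (1-γ))).mul hIn2)
    have hI : HasDerivAt (fun w => ∫ v in t₀..w, v ^ (2*γ) * ‖f' (X v + Real.sqrt s • V v)‖ ^ 2)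
        (u ^ (2*γ) * ‖f' (X u + Real.sqrt s • V u)‖ ^ 2) u := by
      apply intervalIntegral.integral_hasDerivAt_right
      · apply ContinuousOn.intervalIntegrable
        apply hGc.mono
        intro v hv
        rcases le_total t₀ u with h | h
        · rw [uIcc_of_le h] at hv; exact lt_of_lt_of_le ht₀pos hv.1
        · rw [uIcc_of_ge h] at hv; exact lt_of_lt_of_le (by linarith : (0:ℝ) < u) hv.1
      · exact hGc.stronglyMeasurableAtFilter isOpen_Ioi u huM
      · exact hGc.continuousAt (Ioi_mem_nhds hu0)
    refine ⟨_, ((hT1.add hT2).add hT3).add (hI.const_mul (Real.sqrt s/2)), ?_⟩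
    have hcx : f (X u + Real.sqrt s • V u) - f xstar ≤
        ⟪f' (X u + Real.sqrt s • V u), X u - xstar⟫ +
          Real.sqrt s * ⟪f' (X u + Real.sqrt s • V u), V u⟫ := by
      have h := grad_convex_ineq hconv (hgrad (X u + Real.sqrt s • V u)) xstar
      have h2 : ⟪f' (X u + Real.sqrt s • V u), xstar - (X u + Real.sqrt s • V u)⟫ =
          -(⟪f' (X u + Real.sqrt s • V u), X u - xstar⟫ +
            Real.sqrt s * ⟪f' (X u + Real.sqrt s • V u), V u⟫) := by
        simp only [inner_sub_right, inner_add_right, real_inner_smul_right]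
        ring
      rw [h2] at h
      linarith
    have hF0 : 0 ≤ f (X u + Real.sqrt s • V u) - f xstar := sub_nonneg.2 (hmin _)
    have hgg0 : (0:ℝ) ≤ ⟪f' (X u + Real.sqrt s • V u), f' (X u + Real.sqrt s • V u)⟫ :=
      real_inner_self_nonneg
    have hxx0 : (0:ℝ) ≤ ⟪X u - xstar, X u - xstar⟫ := real_inner_self_nonneg
    simp only [inner_add_left, inner_add_right, inner_neg_left, inner_neg_right,
      real_inner_smul_left, real_inner_smul_right, ← real_inner_self_eq_norm_sq,
      Pi.div_apply, Pi.mul_apply]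
    simp only [real_inner_comm (V u) (f' (X u + Real.sqrt s • V u)),
      real_inner_comm (X u - xstar) (f' (X u + Real.sqrt s • V u)),
      real_inner_comm (X u - xstar) (V u)]
    have eA : u^(γ-1) = u^γ/u := by rw [Real.rpow_sub hu0, Real.rpow_one]
    have eB : u^(γ-1-1) = u^γ/u/u := by
      rw [Real.rpow_sub hu0, Real.rpow_sub hu0, Real.rpow_one]
    have eC : u^(2*(γ-1)) = (u^γ/u)*(u^γ/u) := by
      rw [show (2:ℝ)*(γ-1) = (γ-1)+(γ-1) from by ring, Real.rpow_add hu0, eA]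
    have eD : u^(2*(γ-1)-1) = (u^γ/u)*(u^γ/u)/u := by
      rw [Real.rpow_sub hu0, Real.rpow_one, eC]
    have eE : u^(2*γ) = u^γ*u^γ := by
      rw [show (2:ℝ)*γ = γ+γ from by ring, Real.rpow_add hu0]
    rw [eB, eD, eC, eA, eE]
    have hq0 : (0:ℝ) < u^γ := Real.rpow_pos_of_pos hu0 _
    rw [real_inner_comm (X u - xstar) (f' (X u + Real.sqrt s • V u)),
      real_inner_comm (V u) (f' (X u + Real.sqrt s • V u))] at hcx
    set c := Real.sqrt s with hc
    set q := u ^ γ with hqq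
    set F := f (X u + c • V u) - f xstar with hFF
    set a1 : ℝ := inner ℝ (V u) (V u) with ha1
    set a2 : ℝ := inner ℝ (X u - xstar) (V u) with ha2
    set a3 : ℝ := inner ℝ (V u) (f' (X u + c • V u)) with ha3
    set a4 : ℝ := inner ℝ (X u - xstar) (f' (X u + c • V u)) with ha4
    set a5 : ℝ := inner ℝ (f' (X u + c • V u)) (f' (X u + c • V u)) with ha5
    set a6 : ℝ := inner ℝ (X u - xstar) (X u - xstar) with ha6
    have hP : (0:ℝ) < u - 3*γ*c := by linarith
    have hgc : (0:ℝ) < γ*c := mul_pos hγ0 hsq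
    have hBB : q*q*(2*u*(u-3*γ*c)^2*(2*γ-5/2)*(γ*c) + 18*(γ-1)*(γ*c)^2*(u-3*γ*c)^2
        + 54*(γ-1)*(γ*c)^3*(u-3*γ*c) - 27*(γ*c)^3*u) ≤ 0 := by
      have h1 : 2*u*(u-3*γ*c)^2*(2*γ-5/2)*(γ*c) ≤ 0 :=
        mul_nonpos_of_nonpos_of_nonneg
          (mul_nonpos_of_nonneg_of_nonpos
            (mul_nonneg (by linarith : (0:ℝ) ≤ 2*u) (sq_nonneg _))
            (by linarith : 2*γ-5/2 ≤ 0)) hgc.le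
      have h2 : 18*(γ-1)*(γ*c)^2*(u-3*γ*c)^2 ≤ 0 :=
        mul_nonpos_of_nonpos_of_nonneg
          (mul_nonpos_of_nonpos_of_nonneg
            (mul_nonpos_of_nonneg_of_nonpos (by norm_num : (0:ℝ) ≤ 18)
              (by linarith : γ-1 ≤ 0)) (sq_nonneg _)) (sq_nonneg _)
      have h3 : 54*(γ-1)*(γ*c)^3*(u-3*γ*c) ≤ 0 :=
        mul_nonpos_of_nonpos_of_nonneg
          (mul_nonpos_of_nonpos_of_nonneg
            (mul_nonpos_of_nonneg_of_nonpos (by norm_num : (0:ℝ) ≤ 54)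
              (by linarith : γ-1 ≤ 0)) (pow_nonneg hgc.le 3)) hP.le
      have h4 : (0:ℝ) ≤ 27*(γ*c)^3*u :=
        mul_nonneg (mul_nonneg (by norm_num) (pow_nonneg hgc.le 3)) hu0.le
      exact mul_nonpos_of_nonneg_of_nonpos (mul_pos hq0 hq0).le (by linarith)
    have hCG : c*(q*q)*u*(u-3*γ*c)*(u^2*(u-3*γ*c) - 2*(u-2*γ*c)*(u+3*γ*c/2)^2) ≤ 0 := by
      have hin : u^2*(u-3*γ*c) - 2*(u-2*γ*c)*(u+3*γ*c/2)^2 ≤ 0 := by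
        have hiden : u^2*(u-3*γ*c) - 2*(u-2*γ*c)*(u+3*γ*c/2)^2 =
            -((u-3*γ*c)*(u^2 + 8*(γ*c)*u + 33/2*(γ*c)^2) + 81/2*(γ*c)^3) := by ring
        rw [hiden]
        have hquad : (0:ℝ) ≤ u^2 + 8*(γ*c)*u + 33/2*(γ*c)^2 :=
          add_nonneg (add_nonneg (sq_nonneg u)
            (mul_nonneg (mul_nonneg (by norm_num) hgc.le) hu0.le))
            (mul_nonneg (by norm_num) (sq_nonneg _))
        exact neg_nonpos.2 (add_nonneg (mul_nonneg hP.le hquad)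
          (mul_nonneg (by norm_num) (pow_nonneg hgc.le 3)))
      exact mul_nonpos_of_nonneg_of_nonpos
        (mul_nonneg (mul_nonneg (mul_nonneg hsq.le (mul_pos hq0 hq0).le) hu0.le) hP.le) hin
    have hCX : -(4*γ*(1-γ)*(1+γ))*(q*q)*(u-3*γ*c)^2 ≤ 0 := by
      have h0 : (0:ℝ) ≤ 4*γ*(1-γ)*(1+γ) :=
        mul_nonneg (mul_nonneg (by linarith : (0:ℝ) ≤ 4*γ) (by linarith)) (by linarith)
      exact mul_nonpos_of_nonpos_of_nonneg
        (mul_nonpos_of_nonpos_of_nonneg (neg_nonpos.2 h0) (mul_pos hq0 hq0).le) (sq_nonneg _)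
    have hCIX : -(2*γ)*(q*q)*u*(2*u+3*γ*c)*(u-3*γ*c)^2 ≤ 0 := by
      exact mul_nonpos_of_nonpos_of_nonneg
        (mul_nonpos_of_nonpos_of_nonneg
          (mul_nonpos_of_nonpos_of_nonneg
            (mul_nonpos_of_nonpos_of_nonneg
              (neg_nonpos.2 (by linarith : (0:ℝ) ≤ 2*γ)) (mul_pos hq0 hq0).le)
            hu0.le) (by linarith : (0:ℝ) ≤ 2*u+3*γ*c)) (sq_nonneg _)
    have hune : u ≠ 0 := hu0.ne'
    have hPne : u - 3*γ*c ≠ 0 := hP.ne'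
    have hEq : (((γ * (q / u) * (q - 2 * γ * c * (q / u)) + q * (γ * (q / u) - 2 * γ * c * ((γ - 1) * (q / u / u)))) *
                        (u - 3 * γ * c) -
                      q * (q - 2 * γ * c * (q / u)) * 1) /
                    (u - 3 * γ * c) ^ 2 *
                  (u + 3 * γ * c / 2) +
                q * (q - 2 * γ * c * (q / u)) / (u - 3 * γ * c) * 1) *
              F +
            q * (q - 2 * γ * c * (q / u)) / (u - 3 * γ * c) * (u + 3 * γ * c / 2) *
              (a3 + c * -(3 * γ / u * a3 + (1 + 3 * γ * c / (2 * u)) * a5)) +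
          1 / 2 *
            (q * -(3 * γ / u * (q * a1) + (1 + 3 * γ * c / (2 * u)) * (q * a3)) +
                    q * -(3 * γ / u * (2 * γ * (q / u) * a2) + (1 + 3 * γ * c / (2 * u)) * (2 * γ * (q / u) * a4)) +
                  (γ * (q / u) * (q * a1) + γ * (q / u) * (2 * γ * (q / u) * a2)) +
                (2 * γ * (q / u) * (q * a1) + 2 * γ * (q / u) * (2 * γ * (q / u) * a2) +
                  (2 * γ * ((γ - 1) * (q / u / u)) * (q * a2) +
                    2 * γ * ((γ - 1) * (q / u / u)) * (2 * γ * (q / u) * a6))) +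
              (q * (q * -(3 * γ / u * a1 + (1 + 3 * γ * c / (2 * u)) * a3)) + q * (γ * (q / u) * a1) +
                  (q * (2 * γ * (q / u) * a1) + q * (2 * γ * ((γ - 1) * (q / u / u)) * a2)) +
                (2 * γ * (q / u) * (q * -(3 * γ / u * a2 + (1 + 3 * γ * c / (2 * u)) * a4)) +
                    2 * γ * (q / u) * (γ * (q / u) * a2) +
                  (2 * γ * (q / u) * (2 * γ * (q / u) * a2) +
                    2 * γ * (q / u) * (2 * γ * ((γ - 1) * (q / u / u)) * a6))))) +
        (γ * (1 - γ) * (2 * (γ - 1) * (q / u * (q / u) / u)) * a6 + γ * (1 - γ) * (q / u * (q / u)) * (a2 + a2)) +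
      c / 2 * (q * q * a5)
        = ((q*q*(2*u*(u-3*γ*c)^2*(2*γ-5/2)*(γ*c) + 18*(γ-1)*(γ*c)^2*(u-3*γ*c)^2
              + 54*(γ-1)*(γ*c)^3*(u-3*γ*c) - 27*(γ*c)^3*u)
            - (-(2*γ)*(q*q)*u*(2*u+3*γ*c)*(u-3*γ*c)^2)) * F
          + (c*(q*q)*u*(u-3*γ*c)*(u^2*(u-3*γ*c) - 2*(u-2*γ*c)*(u+3*γ*c/2)^2)) * a5
          + (-(4*γ*(1-γ)*(1+γ))*(q*q)*(u-3*γ*c)^2) * a6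
          + (-(2*γ)*(q*q)*u*(2*u+3*γ*c)*(u-3*γ*c)^2) * (a4 + c*a3))
          / (2*u^3*(u-3*γ*c)^2) := by
      have hPne' : u - γ*c*3 ≠ 0 := by contrapose! hPne; linarith
      field_simp
      ring
    rw [hEq]
    have hden : (0:ℝ) < 2*u^3*(u-3*γ*c)^2 := by positivity
    apply div_nonpos_of_nonpos_of_nonneg _ hden.le
    have e1 := mul_nonpos_of_nonpos_of_nonneg hBB hF0
    have e2 := mul_nonpos_of_nonpos_of_nonneg hCG hgg0
    have e3 := mul_nonpos_of_nonpos_of_nonneg hCX hxx0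
    have e4 : -(2*γ)*(q*q)*u*(2*u+3*γ*c)*(u-3*γ*c)^2*(a4 + c*a3 - F) ≤ 0 :=
      mul_nonpos_of_nonpos_of_nonneg hCIX (by linarith)
    refine le_of_eq_of_le (b := q*q*(2*u*(u-3*γ*c)^2*(2*γ-5/2)*(γ*c)
        + 18*(γ-1)*(γ*c)^2*(u-3*γ*c)^2
        + 54*(γ-1)*(γ*c)^3*(u-3*γ*c) - 27*(γ*c)^3*u)*F
      + c*(q*q)*u*(u-3*γ*c)*(u^2*(u-3*γ*c) - 2*(u-2*γ*c)*(u+3*γ*c/2)^2)*a5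
      + -(4*γ*(1-γ)*(1+γ))*(q*q)*(u-3*γ*c)^2*a6
      + -(2*γ)*(q*q)*u*(2*u+3*γ*c)*(u-3*γ*c)^2*(a4 + c*a3 - F)) (by ring) ?_
    exact add_nonpos (add_nonpos (add_nonpos e1 e2) e3) e4
  have hmono : AntitoneOn Φ (Ici t₀) := by
    apply antitoneOn_of_deriv_nonpos (convex_Ici t₀)
    · intro u hu
      obtain ⟨D, hD, _⟩ := key u hu
      exact hD.continuousAt.continuousWithinAt
    · intro u hu
      rw [interior_Ici] at hu
      obtain ⟨D, hD, _⟩ := key u (mem_Ici.2 (le_of_lt hu))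
      exact hD.differentiableAt.differentiableWithinAt
    · intro u hu
      rw [interior_Ici] at hu
      obtain ⟨D, hD, hD0⟩ := key u (mem_Ici.2 (le_of_lt hu))
      rw [hD.deriv]; exact hD0
  have h1 : Φ t ≤ Φ t₀ := hmono self_mem_Ici ht ht
  have h2 : Φ t₀ = lyapCont γ s f xstar X V t₀ := by
    rw [hΦdef]; simp [intervalIntegral.integral_same]
  -- nonnegativity of the Lyapunov function at t
  have h3 : 0 ≤ lyapCont γ s f xstar X V t := by
    have ht0 : 0 < t := lt_of_lt_of_le ht₀pos ht
    have htb : 3 * γ * Real.sqrt s < t := by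
      have := ht₀def ▸ ht; linarith
    have hfac : t ^ γ - 2 * γ * Real.sqrt s * t ^ (γ - 1) = t ^ (γ-1) * (t - 2*γ*Real.sqrt s) := by
      have : t ^ γ = t ^ (γ - 1) * t := by
        rw [show γ = (γ-1) + 1 by ring, Real.rpow_add ht0, Real.rpow_one]; ring_nf
      rw [this]; ring
    unfold lyapCont
    have hp : (0:ℝ) < t ^ (γ-1) := Real.rpow_pos_of_pos ht0 _
    have h2γ : 2*γ*Real.sqrt s < t := by nlinarith
    have hA : 0 ≤ (t ^ γ * (t ^ γ - 2 * γ * Real.sqrt s * t ^ (γ - 1)) / (t - 3 * γ * Real.sqrt s)) *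
        (t + 3 * γ * Real.sqrt s / 2) := by
      apply mul_nonneg
      · apply div_nonneg
        · apply mul_nonneg (Real.rpow_pos_of_pos ht0 _).le
          rw [hfac]; exact mul_nonneg hp.le (by linarith)
        · linarith
      · positivity
    have hw : (0:ℝ) ≤ t ^ (2*(γ-1)) := (Real.rpow_pos_of_pos ht0 _).le
    have hF : 0 ≤ f (X t + Real.sqrt s • V t) - f xstar := sub_nonneg.2 (hmin _)
    have h4 : 0 ≤ γ * (1 - γ) * t ^ (2*(γ-1)) * ‖X t - xstar‖ ^ 2 :=
      mul_nonneg (mul_nonneg (mul_nonneg hγ0.le (by linarith)) hw) (sq_nonneg _)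
    have h5 : 0 ≤ (1/2 : ℝ) * ‖(t ^ γ) • V t + (2 * γ * t ^ (γ - 1)) • (X t - xstar)‖ ^ 2 := by
      positivity
    linarith [mul_nonneg hA hF]
  rw [h2] at h1
  rw [hΦdef] at h1
  simp only at h1
  linarith
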